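/- Let ε > 0, let n be an integer, and let J ⊆ ℝ be an open interval with x + εn > 0 for x ∈ J. Let D = {(x, t, t₁, p) : x ∈ J, t ∈ ℝ, t₁ ∈ ℝ, t < t₁, 0 < p} and let f : D → ℝ be a continuously differentiable positive function such that for all (x, t, t₁, p) ∈ D and all q ∈ ℝ: (f_x + f_t·p + f_{t₁}·f + f_p·q)/√f + 2√f/(x + ε(n+1)) = q/√p + 2√p/(x + εn), where subscripts denote partial derivatives of f and √ is the real nonnegative square root. Then there exists a constant C ≥ 0 such that (√(f(x,t,t₁,p)) − √p)² = (ε(t₁ − t) + C) / ((x + εn)(x + ε(n+1))) for all (x, t, t₁, p) ∈ D; equivalently, f(x,t,t₁,p) = (√p + √((ε(t₁ − t) + C)/((x + εn)(x + ε(n+1)))))². (This is the statement that every semi-discrete equation t_{1x} = f possessing the n-integral I = t_{xx}/√(t_x) + 2√(t_x)/(x + εn) is of the form (53).) -/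

import Mathlib

lemma aux_const_of_deriv_zero {w : ℝ → ℝ} {s : Set ℝ} (hs : s.OrdConnected)
    (hd : ∀ x ∈ s, HasDerivAt w 0 x) {x y : ℝ} (hx : x ∈ s) (hy : y ∈ s) :
    w x = w y := by
  have key : ∀ a b : ℝ, a ∈ s → b ∈ s → a < b → w a = w b := by
    intro a b ha hb hab
    have hsub : Set.Icc a b ⊆ s := hs.out ha hb
    obtain ⟨c, hc, hc2⟩ := exists_hasDerivAt_eq_slope w (fun _ => 0) hab
      (fun z hz => (hd z (hsub hz)).continuousAt.continuousWithinAt)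
      (fun z hz => hd z (hsub (Set.mem_Icc_of_Ioo hz)))
    have hba : b - a ≠ 0 := by linarith
    have : w b - w a = 0 := by
      rw [eq_comm, div_eq_iff hba] at hc2
      linarith
    linarith
  rcases lt_trichotomy x y with h | h | h
  · exact key x y hx hy h
  · rw [h]
  · exact (key y x hy hx h).symm

lemma aux_dp (dx dt dt1 dp F s r a b p : ℝ) (hs : 0 < s) (hr : 0 < r)
    (h0 : (dx + dt*p + dt1*F + dp*0)/s + 2*s/b = 0/r + 2*r/a)
    (h1 : (dx + dt*p + dt1*F + dp*1)/s + 2*s/b = 1/r + 2*r/a) :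
    dp = s / r := by
  have h2 : ((dx + dt*p + dt1*F + dp*1)/s + 2*s/b) - ((dx + dt*p + dt1*F + dp*0)/s + 2*s/b)
      = (1/r + 2*r/a) - (0/r + 2*r/a) := by rw [h0, h1]
  have h3 : dp / s = 1/r := by
    rw [show ((dx + dt*p + dt1*F + dp*1)/s + 2*s/b) - ((dx + dt*p + dt1*F + dp*0)/s + 2*s/b)
      = (dp*1 - dp*0)/s from by ring, show (1/r + 2*r/a) - (0/r + 2*r/a) = 1/r from by ring] at h2
    rw [show dp*1 - dp*0 = dp from by ring] at h2
    exact h2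
  rw [div_eq_div_iff (ne_of_gt hs) (ne_of_gt hr), one_mul] at h3
  rw [eq_div_iff (ne_of_gt hr)]
  linarith [h3]

theorem stmt_14 (ε : ℝ) (hε : 0 < ε) (n : ℤ) (J : Set ℝ)
    (hJ : IsOpen J) (hJc : J.OrdConnected)
    (hJpos : ∀ x ∈ J, 0 < x + ε * (n : ℝ))
    (f : ℝ → ℝ → ℝ → ℝ → ℝ)
    (hf : ContDiffOn ℝ 1 (fun v : ℝ × ℝ × ℝ × ℝ => f v.1 v.2.1 v.2.2.1 v.2.2.2)
      {v : ℝ × ℝ × ℝ × ℝ | v.1 ∈ J ∧ v.2.1 < v.2.2.1 ∧ 0 < v.2.2.2})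
    (hpos : ∀ x t t₁ p : ℝ, x ∈ J → t < t₁ → 0 < p → 0 < f x t t₁ p)
    (hI : ∀ x t t₁ p : ℝ, x ∈ J → t < t₁ → 0 < p → ∀ q : ℝ,
      (deriv (fun x' => f x' t t₁ p) x
        + deriv (fun u => f x u t₁ p) t * p
        + deriv (fun u => f x t u p) t₁ * f x t t₁ p
        + deriv (fun u => f x t t₁ u) p * q) / Real.sqrt (f x t t₁ p)
        + 2 * Real.sqrt (f x t t₁ p) / (x + ε * ((n : ℝ) + 1))
      = q / Real.sqrt p + 2 * Real.sqrt p / (x + ε * (n : ℝ))) :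
    ∃ C : ℝ, 0 ≤ C ∧ ∀ x t t₁ p : ℝ, x ∈ J → t < t₁ → 0 < p →
      (Real.sqrt (f x t t₁ p) - Real.sqrt p)^2
        = (ε * (t₁ - t) + C) / ((x + ε * (n : ℝ)) * (x + ε * ((n : ℝ) + 1))) ∧
      f x t t₁ p = (Real.sqrt p + Real.sqrt ((ε * (t₁ - t) + C)
        / ((x + ε * (n : ℝ)) * (x + ε * ((n : ℝ) + 1)))))^2 := by
  rcases Set.eq_empty_or_nonempty J with hJe | ⟨x₀, hx₀⟩
  · exact ⟨0, le_rfl, fun x t t₁ p hx _ _ => by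
      rw [hJe] at hx; exact absurd hx (Set.notMem_empty x)⟩
  have hbpos : ∀ x ∈ J, 0 < x + ε * ((n : ℝ) + 1) := by
    intro x hx; have := hJpos x hx; nlinarith
  have hapos := hJpos
  have hSopen : IsOpen {v : ℝ × ℝ × ℝ × ℝ | v.1 ∈ J ∧ v.2.1 < v.2.2.1 ∧ 0 < v.2.2.2} := by
    have h1 : IsOpen {v : ℝ × ℝ × ℝ × ℝ | v.1 ∈ J} := hJ.preimage continuous_fst
    have h2 : IsOpen {v : ℝ × ℝ × ℝ × ℝ | v.2.1 < v.2.2.1} := isOpen_lt (by fun_prop) (by fun_prop)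
    have h3 : IsOpen {v : ℝ × ℝ × ℝ × ℝ | 0 < v.2.2.2} := isOpen_lt (by fun_prop) (by fun_prop)
    exact h1.inter (h2.inter h3)
  have hfd : ∀ x t t₁ p : ℝ, x ∈ J → t < t₁ → 0 < p →
      DifferentiableAt ℝ (fun v : ℝ × ℝ × ℝ × ℝ => f v.1 v.2.1 v.2.2.1 v.2.2.2) (x, t, t₁, p) := by
    intro x t t₁ p hx ht hp
    exact (hf.differentiableOn one_ne_zero).differentiableAt
      (hSopen.mem_nhds (show (x,t,t₁,p) ∈ _ from ⟨hx, ht, hp⟩))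
  have hdx : ∀ x t t₁ p : ℝ, x ∈ J → t < t₁ → 0 < p →
      DifferentiableAt ℝ (fun x' => f x' t t₁ p) x := fun x t t₁ p hx ht hp =>
    by have h := ((hfd x t t₁ p hx ht hp).comp x
      (by fun_prop : DifferentiableAt ℝ (fun u : ℝ => ((u, t, t₁, p) : ℝ×ℝ×ℝ×ℝ)) x)); exact h
  have hdt : ∀ x t t₁ p : ℝ, x ∈ J → t < t₁ → 0 < p →
      DifferentiableAt ℝ (fun u => f x u t₁ p) t := fun x t t₁ p hx ht hp =>
    by have h := ((hfd x t t₁ p hx ht hp).comp t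
      (by fun_prop : DifferentiableAt ℝ (fun u : ℝ => ((x, u, t₁, p) : ℝ×ℝ×ℝ×ℝ)) t)); exact h
  have hdt1 : ∀ x t t₁ p : ℝ, x ∈ J → t < t₁ → 0 < p →
      DifferentiableAt ℝ (fun u => f x t u p) t₁ := fun x t t₁ p hx ht hp =>
    by have h := ((hfd x t t₁ p hx ht hp).comp t₁
      (by fun_prop : DifferentiableAt ℝ (fun u : ℝ => ((x, t, u, p) : ℝ×ℝ×ℝ×ℝ)) t₁)); exact h
  have hdp : ∀ x t t₁ p : ℝ, x ∈ J → t < t₁ → 0 < p →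
      DifferentiableAt ℝ (fun u => f x t t₁ u) p := fun x t t₁ p hx ht hp =>
    by have h := ((hfd x t t₁ p hx ht hp).comp p
      (by fun_prop : DifferentiableAt ℝ (fun u : ℝ => ((x, t, t₁, u) : ℝ×ℝ×ℝ×ℝ)) p)); exact h
  -- Step A: ∂f/∂p = √f/√p
  have hfp : ∀ x t t₁ p : ℝ, x ∈ J → t < t₁ → 0 < p →
      deriv (fun u => f x t t₁ u) p = Real.sqrt (f x t t₁ p) / Real.sqrt p := by
    intro x t t₁ p hx ht hp
    have ha := hapos x hx
    have hb := hbpos x hx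
    have hFpos := hpos x t t₁ p hx ht hp
    have hs : 0 < Real.sqrt (f x t t₁ p) := Real.sqrt_pos.2 hFpos
    have hr : 0 < Real.sqrt p := Real.sqrt_pos.2 hp
    exact aux_dp _ _ _ _ _ _ _ _ _ _ hs hr (hI x t t₁ p hx ht hp 0) (hI x t t₁ p hx ht hp 1)
  -- Step B: √f = √p + G
  set G : ℝ → ℝ → ℝ → ℝ := fun x t t₁ => Real.sqrt (f x t t₁ 1) - 1 with hGdef
  have hsqrt : ∀ x t t₁ p : ℝ, x ∈ J → t < t₁ → 0 < p →
      Real.sqrt (f x t t₁ p) = Real.sqrt p + G x t t₁ := by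
    intro x t t₁ p hx ht hp
    have key : ∀ z ∈ Set.Ioi (0:ℝ),
        HasDerivAt (fun u => Real.sqrt (f x t t₁ u) - Real.sqrt u) 0 z := by
      intro z hz
      have hz' : (0:ℝ) < z := hz
      have hFpos := hpos x t t₁ z hx ht hz'
      have hdz : HasDerivAt (fun u => f x t t₁ u) (Real.sqrt (f x t t₁ z) / Real.sqrt z) z := by
        have h := (hdp x t t₁ z hx ht hz').hasDerivAt
        rwa [hfp x t t₁ z hx ht hz'] at h
      have h1 : HasDerivAt (fun u => Real.sqrt (f x t t₁ u))
          (1 / (2 * Real.sqrt (f x t t₁ z)) * (Real.sqrt (f x t t₁ z) / Real.sqrt z)) z :=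
        ((Real.hasDerivAt_sqrt (ne_of_gt hFpos)).comp z hdz : _)
      have h2 : HasDerivAt Real.sqrt (1 / (2 * Real.sqrt z)) z :=
        Real.hasDerivAt_sqrt (ne_of_gt hz')
      have h3 := h1.sub h2
      refine h3.congr_deriv ?_
      have hs : Real.sqrt (f x t t₁ z) ≠ 0 := ne_of_gt (Real.sqrt_pos.2 hFpos)
      have hr : Real.sqrt z ≠ 0 := ne_of_gt (Real.sqrt_pos.2 hz')
      field_simp
      ring
    have h4 := aux_const_of_deriv_zero Set.ordConnected_Ioi key
      (Set.mem_Ioi.2 hp) (Set.mem_Ioi.2 one_pos)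
    rw [Real.sqrt_one] at h4
    show Real.sqrt (f x t t₁ p) = Real.sqrt p + (Real.sqrt (f x t t₁ 1) - 1)
    linarith
  -- G nonneg
  have hGnn : ∀ x t t₁ : ℝ, x ∈ J → t < t₁ → 0 ≤ G x t t₁ := by
    intro x t t₁ hx ht
    by_contra h
    push_neg at h
    have hp : 0 < (G x t t₁)^2 := by nlinarith
    have := hsqrt x t t₁ ((G x t t₁)^2) hx ht hp
    rw [Real.sqrt_sq_eq_abs, abs_of_neg h] at this
    have h2 : Real.sqrt (f x t t₁ ((G x t t₁)^2)) = 0 := by linarith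
    have h3 := hpos x t t₁ ((G x t t₁)^2) hx ht hp
    rw [Real.sqrt_eq_zero h3.le] at h2
    exact absurd h2 (ne_of_gt h3)
  -- f formula
  have hfeq : ∀ x t t₁ p : ℝ, x ∈ J → t < t₁ → 0 < p →
      f x t t₁ p = (Real.sqrt p + G x t t₁)^2 := by
    intro x t t₁ p hx ht hp
    rw [← hsqrt x t t₁ p hx ht hp, Real.sq_sqrt (hpos x t t₁ p hx ht hp).le]
  -- derivative package for G
  have hGd : ∀ x t t₁ : ℝ, x ∈ J → t < t₁ →
      ∃ gx gt gt1 : ℝ,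
        HasDerivAt (fun x' => G x' t t₁) gx x ∧
        HasDerivAt (fun u => G x u t₁) gt t ∧
        HasDerivAt (fun u => G x t u) gt1 t₁ ∧
        gt + gt1 = 0 ∧
        2 * G x t t₁ * gt1 * ((x + ε*n) * (x + ε*(n+1))) = ε ∧
        gx * (x + ε*(n+1)) + gt1 * (G x t t₁)^2 * (x + ε*(n+1)) + G x t t₁ = 0 := by
    intro x t t₁ hx ht
    have ha := hapos x hx
    have hb := hbpos x hx
    have hF1 := hpos x t t₁ 1 hx ht one_pos
    -- differentiability of G-slices
    have hgx0 : HasDerivAt (fun x' => G x' t t₁)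
        (1/(2*Real.sqrt (f x t t₁ 1)) * deriv (fun x' => f x' t t₁ 1) x) x := by
      have hd := (hdx x t t₁ 1 hx ht one_pos).hasDerivAt
      have h1 : HasDerivAt (fun x' => Real.sqrt (f x' t t₁ 1))
          (1/(2*Real.sqrt (f x t t₁ 1)) * deriv (fun x' => f x' t t₁ 1) x) x :=
        ((Real.hasDerivAt_sqrt (ne_of_gt hF1)).comp x hd : _)
      exact h1.sub_const 1
    have hgt0 : HasDerivAt (fun u => G x u t₁)
        (1/(2*Real.sqrt (f x t t₁ 1)) * deriv (fun u => f x u t₁ 1) t) t := by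
      have hd := (hdt x t t₁ 1 hx ht one_pos).hasDerivAt
      have h1 : HasDerivAt (fun u => Real.sqrt (f x u t₁ 1))
          (1/(2*Real.sqrt (f x t t₁ 1)) * deriv (fun u => f x u t₁ 1) t) t :=
        ((Real.hasDerivAt_sqrt (ne_of_gt hF1)).comp t hd : _)
      exact h1.sub_const 1
    have hgt10 : HasDerivAt (fun u => G x t u)
        (1/(2*Real.sqrt (f x t t₁ 1)) * deriv (fun u => f x t u 1) t₁) t₁ := by
      have hd := (hdt1 x t t₁ 1 hx ht one_pos).hasDerivAt
      have h1 : HasDerivAt (fun u => Real.sqrt (f x t u 1))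
          (1/(2*Real.sqrt (f x t t₁ 1)) * deriv (fun u => f x t u 1) t₁) t₁ :=
        ((Real.hasDerivAt_sqrt (ne_of_gt hF1)).comp t₁ hd : _)
      exact h1.sub_const 1
    obtain ⟨gx, hgx⟩ : ∃ d, HasDerivAt (fun x' => G x' t t₁) d x := ⟨_, hgx0⟩
    obtain ⟨gt, hgt⟩ : ∃ d, HasDerivAt (fun u => G x u t₁) d t := ⟨_, hgt0⟩
    obtain ⟨gt1, hgt1⟩ : ∃ d, HasDerivAt (fun u => G x t u) d t₁ := ⟨_, hgt10⟩
    clear hgx0 hgt0 hgt10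
    -- the master equation
    have master : ∀ p : ℝ, 0 < p →
        gx + gt*p + gt1*(Real.sqrt p + G x t t₁)^2
          + (Real.sqrt p + G x t t₁)/(x + ε*((n:ℝ)+1)) = Real.sqrt p/(x + ε*(n:ℝ)) := by
      intro p hp
      have hu : 0 < Real.sqrt p + G x t t₁ := by
        rw [← hsqrt x t t₁ p hx ht hp]
        exact Real.sqrt_pos.2 (hpos x t t₁ p hx ht hp)
      have hune := ne_of_gt hu
      have hdx' : deriv (fun x' => f x' t t₁ p) x = 2*(Real.sqrt p + G x t t₁)*gx := by
        have hEx : (fun x' => f x' t t₁ p) =ᶠ[nhds x]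
            (fun x' => (Real.sqrt p + G x' t t₁)^2) :=
          Filter.eventually_of_mem (hJ.mem_nhds hx) (fun x' hx' => hfeq x' t t₁ p hx' ht hp)
        have hD : HasDerivAt (fun x' => (Real.sqrt p + G x' t t₁)^2)
            (2*(Real.sqrt p + G x t t₁)*gx) x := by
          have h := ((hasDerivAt_const x (Real.sqrt p)).add hgx).pow 2
          refine h.congr_deriv ?_
          norm_num
        exact (hD.congr_of_eventuallyEq hEx).deriv
      have hdt' : deriv (fun u => f x u t₁ p) t = 2*(Real.sqrt p + G x t t₁)*gt := by
        have hEx : (fun u => f x u t₁ p) =ᶠ[nhds t]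
            (fun u => (Real.sqrt p + G x u t₁)^2) :=
          Filter.eventually_of_mem (isOpen_Iio.mem_nhds (Set.mem_Iio.2 ht))
            (fun u hu' => hfeq x u t₁ p hx hu' hp)
        have hD : HasDerivAt (fun u => (Real.sqrt p + G x u t₁)^2)
            (2*(Real.sqrt p + G x t t₁)*gt) t := by
          have h := ((hasDerivAt_const t (Real.sqrt p)).add hgt).pow 2
          refine h.congr_deriv ?_
          norm_num
        exact (hD.congr_of_eventuallyEq hEx).deriv
      have hdt1' : deriv (fun u => f x t u p) t₁ = 2*(Real.sqrt p + G x t t₁)*gt1 := by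
        have hEx : (fun u => f x t u p) =ᶠ[nhds t₁]
            (fun u => (Real.sqrt p + G x t u)^2) :=
          Filter.eventually_of_mem (isOpen_Ioi.mem_nhds (Set.mem_Ioi.2 ht))
            (fun u hu' => hfeq x t u p hx hu' hp)
        have hD : HasDerivAt (fun u => (Real.sqrt p + G x t u)^2)
            (2*(Real.sqrt p + G x t t₁)*gt1) t₁ := by
          have h := ((hasDerivAt_const t₁ (Real.sqrt p)).add hgt1).pow 2
          refine h.congr_deriv ?_
          norm_num
        exact (hD.congr_of_eventuallyEq hEx).deriv
      have h0 := hI x t t₁ p hx ht hp 0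
      rw [hdx', hdt', hdt1', hsqrt x t t₁ p hx ht hp, hfeq x t t₁ p hx ht hp] at h0
      rw [show 2*(Real.sqrt p + G x t t₁)*gx + 2*(Real.sqrt p + G x t t₁)*gt * p
          + 2*(Real.sqrt p + G x t t₁)*gt1 * (Real.sqrt p + G x t t₁)^2
          + deriv (fun u => f x t t₁ u) p * 0
        = (2*(gx + gt*p + gt1*(Real.sqrt p + G x t t₁)^2)) * (Real.sqrt p + G x t t₁)
          from by ring, mul_div_cancel_right₀ _ hune, zero_div] at h0
      have hane := ne_of_gt ha
      have hbne := ne_of_gt hb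
      field_simp at h0 ⊢
      linarith [h0]
    have sqrt4 : Real.sqrt 4 = 2 := by
      rw [show (4:ℝ) = 2^2 by norm_num, Real.sqrt_sq (by norm_num : (0:ℝ) ≤ 2)]
    have sqrt9 : Real.sqrt 9 = 3 := by
      rw [show (9:ℝ) = 3^2 by norm_num, Real.sqrt_sq (by norm_num : (0:ℝ) ≤ 3)]
    have m1 := master 1 one_pos
    have m4 := master 4 (by norm_num)
    have m9 := master 9 (by norm_num)
    rw [Real.sqrt_one] at m1
    rw [sqrt4] at m4
    rw [sqrt9] at m9
    have hane := ne_of_gt ha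
    have hbne := ne_of_gt hb
    refine ⟨gx, gt, gt1, hgx, hgt, hgt1, ?_, ?_, ?_⟩
    · linear_combination (m1 - 2*m4 + m9)/2
    · have hEdiv : 2*G x t t₁*gt1 = 1/(x + ε*(n:ℝ)) - 1/(x + ε*((n:ℝ)+1)) := by
        linear_combination (-5/2)*m1 + 4*m4 + (-3/2)*m9
      have h2 : (1/(x + ε*(n:ℝ)) - 1/(x + ε*((n:ℝ)+1))) * ((x + ε*(n:ℝ))*(x + ε*((n:ℝ)+1))) = ε := by
        field_simp
        ring
      rw [show (2:ℝ)*G x t t₁*gt1*((x + ε*(n:ℝ))*(x + ε*((n:ℝ)+1)))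
        = (2*G x t t₁*gt1)*((x + ε*(n:ℝ))*(x + ε*((n:ℝ)+1))) from by ring, hEdiv, h2]
    · have hAdiv : gx + gt1*(G x t t₁)^2 + G x t t₁/(x + ε*((n:ℝ)+1)) = 0 := by
        linear_combination 3*m1 - 3*m4 + m9
      have h2 : gx*(x + ε*((n:ℝ)+1)) + gt1*(G x t t₁)^2*(x + ε*((n:ℝ)+1)) + G x t t₁
          = (gx + gt1*(G x t t₁)^2 + G x t t₁/(x + ε*((n:ℝ)+1))) * (x + ε*((n:ℝ)+1)) := by
        field_simp
      rw [h2, hAdiv, zero_mul]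
  -- Φ and its vanishing slice derivatives
  set Φ : ℝ → ℝ → ℝ → ℝ :=
    fun x t t₁ => (x + ε*n) * (x + ε*(n+1)) * (G x t t₁)^2 - ε*(t₁ - t) with hΦdef
  have hΦd : ∀ x t t₁ : ℝ, x ∈ J → t < t₁ →
      HasDerivAt (fun x' => Φ x' t t₁) 0 x ∧
      HasDerivAt (fun u => Φ x u t₁) 0 t ∧
      HasDerivAt (fun u => Φ x t u) 0 t₁ := by
    intro x t t₁ hx ht
    obtain ⟨gx, gt, gt1, hgx, hgt, hgt1, hB, hE, hA⟩ := hGd x t t₁ hx ht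
    have ha := hapos x hx
    have hb := hbpos x hx
    refine ⟨?_, ?_, ?_⟩
    · have h1 : HasDerivAt (fun x' : ℝ => x' + ε*n) 1 x := by
        simpa using (hasDerivAt_id x).add_const (ε*(n:ℝ))
      have h2 : HasDerivAt (fun x' : ℝ => x' + ε*((n:ℝ)+1)) 1 x := by
        simpa using (hasDerivAt_id x).add_const (ε*((n:ℝ)+1))
      have hP := h1.mul h2
      have hg2 := hgx.pow 2
      have hprod := hP.mul hg2
      have htot := hprod.sub_const (ε*(t₁ - t))
      refine htot.congr_deriv ?_
      simp only [Pi.mul_apply, Pi.pow_apply]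
      push_cast
      linear_combination (2*(x + ε*(n:ℝ))*G x t t₁)*hA - (G x t t₁^2)*hE
    · have hg2 := hgt.pow 2
      have hc := hg2.const_mul ((x + ε*n) * (x + ε*((n:ℝ)+1)))
      have hlin : HasDerivAt (fun u : ℝ => ε*(t₁ - u)) (-ε) t := by
        have h := ((hasDerivAt_const t t₁).sub (hasDerivAt_id t)).const_mul ε
        simpa using h
      have htot := hc.sub hlin
      refine htot.congr_deriv ?_
      push_cast
      linear_combination (2*(G x t t₁)*((x + ε*(n:ℝ))*(x + ε*((n:ℝ)+1))))*hB - hE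
    · have hg2 := hgt1.pow 2
      have hc := hg2.const_mul ((x + ε*n) * (x + ε*((n:ℝ)+1)))
      have hlin : HasDerivAt (fun u : ℝ => ε*(u - t)) ε t₁ := by
        have h := ((hasDerivAt_id t₁).sub_const t).const_mul ε
        simpa using h
      have htot := hc.sub hlin
      refine htot.congr_deriv ?_
      push_cast
      linear_combination hE
  -- constancy of Φ
  have hconst : ∀ x t t₁ : ℝ, x ∈ J → t < t₁ → Φ x t t₁ = Φ x₀ 0 1 := by
    intro x t t₁ hx ht
    have step1 : Φ x t t₁ = Φ x₀ t t₁ :=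
      aux_const_of_deriv_zero hJc (fun z hz => (hΦd z t t₁ hz ht).1) hx hx₀
    set M : ℝ := max t₁ 1 + 1 with hM
    have hM1 : t₁ < M := by have h := le_max_left t₁ (1:ℝ); linarith
    have hM2 : (1:ℝ) < M := by have h := le_max_right t₁ (1:ℝ); linarith
    have step2 : Φ x₀ t t₁ = Φ x₀ t M :=
      aux_const_of_deriv_zero Set.ordConnected_Ioi
        (fun z hz => (hΦd x₀ t z hx₀ hz).2.2) (Set.mem_Ioi.2 ht) (Set.mem_Ioi.2 (ht.trans hM1))
    have step3 : Φ x₀ t M = Φ x₀ 0 M :=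
      aux_const_of_deriv_zero Set.ordConnected_Iio
        (fun z hz => (hΦd x₀ z M hx₀ hz).2.1) (Set.mem_Iio.2 (ht.trans hM1))
        (Set.mem_Iio.2 (by linarith))
    have step4 : Φ x₀ 0 M = Φ x₀ 0 1 :=
      aux_const_of_deriv_zero Set.ordConnected_Ioi
        (fun z hz => (hΦd x₀ 0 z hx₀ hz).2.2) (Set.mem_Ioi.2 (by linarith))
        (Set.mem_Ioi.2 one_pos)
    rw [step1, step2, step3, step4]
  have hconst' : ∀ x t t₁ : ℝ, x ∈ J → t < t₁ →
      (x + ε*n) * (x + ε*(n+1)) * (G x t t₁)^2 - ε*(t₁ - t) = Φ x₀ 0 1 :=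
    fun x t t₁ hx ht => hconst x t t₁ hx ht
  clear_value Φ G
  refine ⟨Φ x₀ 0 1, ?_, ?_⟩
  · -- C ≥ 0
    have hlb : ∀ δ : ℝ, 0 < δ → -(ε*δ) ≤ Φ x₀ 0 1 := by
      intro δ hδ
      have h2 := hconst' x₀ 0 δ hx₀ hδ
      have hH : 0 ≤ (x₀ + ε*n) * (x₀ + ε*(n+1)) * (G x₀ 0 δ)^2 := by
        have h3 := hapos x₀ hx₀; have h4 := hbpos x₀ hx₀; positivity
      linarith
    by_contra h
    push_neg at h
    have hδ : 0 < -Φ x₀ 0 1 / (2*ε) := div_pos (by linarith) (by linarith)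
    have h2 := hlb _ hδ
    have h3 : ε * (-Φ x₀ 0 1 / (2*ε)) = -Φ x₀ 0 1 / 2 := by
      field_simp
    linarith
  · intro x t t₁ p hx ht hp
    have ha := hapos x hx
    have hb := hbpos x hx
    have habne : (x + ε*n) * (x + ε*(n+1)) ≠ 0 := by positivity
    have hkey : (G x t t₁)^2 = (ε * (t₁ - t) + Φ x₀ 0 1) / ((x + ε*n) * (x + ε*(n+1))) := by
      have h6 := hconst' x t t₁ hx ht
      field_simp
      linarith
    constructor
    · rw [hsqrt x t t₁ p hx ht hp,
        show Real.sqrt p + G x t t₁ - Real.sqrt p = G x t t₁ from by ring, hkey]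
    · rw [hfeq x t t₁ p hx ht hp, ← hkey, Real.sqrt_sq (hGnn x t t₁ hx ht)]
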